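/- (Corollary 2: price equilibrium for naïve consumers under a fine.) Fix T > 0, 0 ≤ a, 0 ≤ b, a + b < 1, q1, q2 ∈ ℝ, C1, C2, S1, S2 ≥ 0, Z_A ∈ ℝ, fine amounts f1, f2 ≥ 0, and β = 0. With π1(p1,p2) = (p1 − f1)·D1(p1,p2) − C1(a−Z_A)² − S1·q1²·(a−Z_A)² and π2(p1,p2) = (p2 − f2)·(1−D1(p1,p2)) − C2(1−b−Z_A)² − S2·q2²·(1−b−Z_A)², where D1(p1,p2) = a + (1−a−b)/2 + (p2−p1)/(2T(1−a−b)), the unique pair (p1,p2) ∈ ℝ² of mutual best responses over ℝ is p1* = T(1−a−b)(1+(a−b)/3) + (2/3)f1 + (1/3)f2 and p2* = T(1−a−b)(1+(b−a)/3) + (2/3)f2 + (1/3)f1. -/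

import Mathlib

private lemma vertex_diff (c A q f p v : ℝ) (hc : c ≠ 0) (hv : v = (c * A + q + f) / 2) :
    (v - f) * (A + (q - v) / c) - (p - f) * (A + (q - p) / c) = (p - v) ^ 2 / c := by
  subst hv; field_simp; ring

/-- Corollary 2: with naïve consumers (β = 0) and fines `f1, f2 ≥ 0`, the unique
price Nash equilibrium is `p1* = T(1−a−b)(1+(a−b)/3) + 2f1/3 + f2/3` and
`p2* = T(1−a−b)(1+(b−a)/3) + 2f2/3 + f1/3`. -/
theorem price_nash_equilibrium_fine_naive
    (T a b q1 q2 C1 C2 S1 S2 ZA f1 f2 : ℝ)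
    (hT : 0 < T) (ha : 0 ≤ a) (hb : 0 ≤ b) (hab : a + b < 1)
    (hC1 : 0 ≤ C1) (hC2 : 0 ≤ C2) (hS1 : 0 ≤ S1) (hS2 : 0 ≤ S2)
    (hf1 : 0 ≤ f1) (hf2 : 0 ≤ f2) :
    let D1 : ℝ → ℝ → ℝ := fun p1 p2 =>
      a + (1 - a - b) / 2 + (p2 - p1) / (2 * T * (1 - a - b))
    let π1 : ℝ → ℝ → ℝ := fun p1 p2 =>
      (p1 - f1) * D1 p1 p2 - C1 * (a - ZA) ^ 2 - S1 * q1 ^ 2 * (a - ZA) ^ 2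
    let π2 : ℝ → ℝ → ℝ := fun p1 p2 =>
      (p2 - f2) * (1 - D1 p1 p2) - C2 * (1 - b - ZA) ^ 2 - S2 * q2 ^ 2 * (1 - b - ZA) ^ 2
    let p1star : ℝ := T * (1 - a - b) * (1 + (a - b) / 3) + (2 / 3) * f1 + (1 / 3) * f2
    let p2star : ℝ := T * (1 - a - b) * (1 + (b - a) / 3) + (2 / 3) * f2 + (1 / 3) * f1
    ((∀ p : ℝ, π1 p p2star ≤ π1 p1star p2star) ∧
      (∀ p : ℝ, π2 p1star p ≤ π2 p1star p2star)) ∧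
    ∀ p1 p2 : ℝ,
      ((∀ p : ℝ, π1 p p2 ≤ π1 p1 p2) ∧ (∀ p : ℝ, π2 p1 p ≤ π2 p1 p2)) →
      p1 = p1star ∧ p2 = p2star := by
  intro D1 π1 π2 p1star p2star
  have hs : 0 < 1 - a - b := by linarith
  set c : ℝ := 2 * T * (1 - a - b) with hcdef
  have hc : 0 < c := by positivity
  have hc' : c ≠ 0 := ne_of_gt hc
  set A1 : ℝ := a + (1 - a - b) / 2 with hA1
  set A2 : ℝ := b + (1 - a - b) / 2 with hA2
  -- rewrite payoffs
  have hπ1 : ∀ p q : ℝ, π1 p q = (p - f1) * (A1 + (q - p) / c)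
      - C1 * (a - ZA) ^ 2 - S1 * q1 ^ 2 * (a - ZA) ^ 2 := by
    intro p q; simp only [π1, D1, hA1]; rfl
  have hπ2 : ∀ p q : ℝ, π2 p q = (q - f2) * (A2 + (p - q) / c)
      - C2 * (1 - b - ZA) ^ 2 - S2 * q2 ^ 2 * (1 - b - ZA) ^ 2 := by
    intro p q
    simp only [π2, D1]
    have h1 : 1 - (a + (1 - a - b) / 2 + (q - p) / c) = A2 + (p - q) / c := by
      rw [hA2]; field_simp; ring
    rw [h1]
  -- vertex characterization: p is the unique maximizer of π1 · q iff p = (c*A1+q+f1)/2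
  have key1 : ∀ p q : ℝ, π1 ((c * A1 + q + f1) / 2) q - π1 p q
      = (p - (c * A1 + q + f1) / 2) ^ 2 / c := by
    intro p q
    rw [hπ1, hπ1]
    have := vertex_diff c A1 q f1 p ((c * A1 + q + f1) / 2) hc' rfl
    linarith [this]
  have key2 : ∀ p q : ℝ, π2 p ((c * A2 + p + f2) / 2) - π2 p q
      = (q - (c * A2 + p + f2) / 2) ^ 2 / c := by
    intro p q
    rw [hπ2, hπ2]
    have := vertex_diff c A2 p f2 q ((c * A2 + p + f2) / 2) hc' rfl
    linarith [this]
  -- the stars are the vertices of each other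
  have hv1 : p1star = (c * A1 + p2star + f1) / 2 := by
    simp only [p1star, p2star, hA1, hcdef]; ring
  have hv2 : p2star = (c * A2 + p1star + f2) / 2 := by
    simp only [p1star, p2star, hA2, hcdef]; ring
  constructor
  · constructor
    · intro p
      have h := key1 p p2star
      rw [← hv1] at h
      exact sub_nonneg.mp (h ▸ div_nonneg (sq_nonneg (p - p1star)) hc.le)
    · intro p
      have h := key2 p1star p
      rw [← hv2] at h
      exact sub_nonneg.mp (h ▸ div_nonneg (sq_nonneg (p - p2star)) hc.le)
  · rintro p1 p2 ⟨h1, h2⟩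
    have e1 : p1 = (c * A1 + p2 + f1) / 2 := by
      have hmax := h1 ((c * A1 + p2 + f1) / 2)
      have hk := key1 p1 p2
      have hsq : (p1 - (c * A1 + p2 + f1) / 2) ^ 2 / c ≤ 0 := by linarith
      have : (p1 - (c * A1 + p2 + f1) / 2) ^ 2 ≤ 0 := by
        by_contra hcon
        push_neg at hcon
        exact absurd (div_pos hcon hc) (not_lt.mpr hsq)
      have := le_antisymm this (sq_nonneg _)
      have := pow_eq_zero_iff (n := 2) (by norm_num) |>.mp this
      linarith
    have e2 : p2 = (c * A2 + p1 + f2) / 2 := by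
      have hmax := h2 ((c * A2 + p1 + f2) / 2)
      have hk := key2 p1 p2
      have hsq : (p2 - (c * A2 + p1 + f2) / 2) ^ 2 / c ≤ 0 := by linarith
      have : (p2 - (c * A2 + p1 + f2) / 2) ^ 2 ≤ 0 := by
        by_contra hcon
        push_neg at hcon
        exact absurd (div_pos hcon hc) (not_lt.mpr hsq)
      have := le_antisymm this (sq_nonneg _)
      have := pow_eq_zero_iff (n := 2) (by norm_num) |>.mp this
      linarith
    have hp1 : p1 = (2 * (c * A1) + c * A2 + 2 * f1 + f2) / 3 := by linarith
    have hp2 : p2 = (2 * (c * A2) + c * A1 + 2 * f2 + f1) / 3 := by linarith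
    constructor
    · rw [hp1]
      simp only [p1star, hcdef, hA1, hA2]
      ring
    · rw [hp2]
      simp only [p2star, hcdef, hA1, hA2]
      ring
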